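/- arXiv:2001.09284 — 5 statements merged into one kernel-verified Lean document; each statement's English description precedes it below -/
import Mathlib

section
/- Let s, p ≥ 1, let W_t ∈ ℝ^{s×2} and W_c ∈ ℝ^{s×p} be real matrices, let Σ_t ∈ ℝ^{2×2} and Σ_c ∈ ℝ^{p×p} be symmetric positive definite matrices, and let σ_v > 0. Define Σ_X = W_t Σ_t W_tᵀ + W_c Σ_c W_cᵀ + σ_v² I_s and C_X = W_t Σ_t W_tᵀ + σ_v² I_s (both are positive definite, hence invertible), and set K_nocal = Σ_t W_tᵀ Σ_X⁻¹ and K_cal = Σ_t W_tᵀ C_X⁻¹. If W_tᵀ W_c = 0, then K_nocal = K_cal. -/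
open Matrix

lemma smul_one_posDef {s : ℕ} (c : ℝ) (hc : 0 < c) :
    (c • (1 : Matrix (Fin s) (Fin s) ℝ)).PosDef := by
  have : c • (1 : Matrix (Fin s) (Fin s) ℝ) = Matrix.diagonal (fun _ => c) := by
    ext i j; by_cases h : i = j <;> simp [Matrix.diagonal, Matrix.one_apply, h]
  rw [this]
  exact Matrix.posDef_diagonal_iff.mpr fun _ => hc

/-- **Theorem 1 (paper):** if gaze-dependent and subject-dependent appearance variations
are orthogonal (`Wtᵀ * Wc = 0`), the optimal linear gaze estimator without calibration
`K_nocal = Σt Wtᵀ ΣX⁻¹` equals the optimal estimator with ideal calibration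
`K_cal = Σt Wtᵀ CX⁻¹`. -/
theorem stmt_0 {s p : ℕ} (hs : 1 ≤ s) (hp : 1 ≤ p)
    (Wt : Matrix (Fin s) (Fin 2) ℝ) (Wc : Matrix (Fin s) (Fin p) ℝ)
    (St : Matrix (Fin 2) (Fin 2) ℝ) (Sc : Matrix (Fin p) (Fin p) ℝ)
    (hSt : St.PosDef) (hSc : Sc.PosDef)
    (σv : ℝ) (hσv : 0 < σv)
    (SX CX : Matrix (Fin s) (Fin s) ℝ)
    (hSX : SX = Wt * St * Wtᵀ + Wc * Sc * Wcᵀ + σv ^ 2 • (1 : Matrix (Fin s) (Fin s) ℝ))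
    (hCX : CX = Wt * St * Wtᵀ + σv ^ 2 • (1 : Matrix (Fin s) (Fin s) ℝ))
    (horth : Wtᵀ * Wc = 0) :
    St * Wtᵀ * SX⁻¹ = St * Wtᵀ * CX⁻¹ := by
  have hIσ : (σv ^ 2 • (1 : Matrix (Fin s) (Fin s) ℝ)).PosDef :=
    smul_one_posDef _ (by positivity)
  have hWtSemi : (Wt * St * Wtᵀ).PosSemidef := by
    have := hSt.posSemidef.mul_mul_conjTranspose_same Wt
    simpa using this
  have hWcSemi : (Wc * Sc * Wcᵀ).PosSemidef := by
    have := hSc.posSemidef.mul_mul_conjTranspose_same Wc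
    simpa using this
  have hCXpd : CX.PosDef := by
    rw [hCX]; exact Matrix.PosDef.posSemidef_add hWtSemi hIσ
  have hSXpd : SX.PosDef := by
    rw [hSX]; exact Matrix.PosDef.posSemidef_add (hWtSemi.add hWcSemi) hIσ
  have hCXinv : Invertible CX := hCXpd.isUnit.invertible
  have hSXinv : Invertible SX := hSXpd.isUnit.invertible
  -- Wcᵀ * Wt = 0
  have horth' : Wcᵀ * Wt = 0 := by
    have := congrArg Matrix.transpose horth
    simpa [Matrix.transpose_mul] using this
  -- Wtᵀ * SX = Wtᵀ * CX
  have key : Wtᵀ * SX = Wtᵀ * CX := by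
    rw [hSX, hCX]
    simp only [Matrix.mul_add]
    have : Wtᵀ * (Wc * Sc * Wcᵀ) = 0 := by
      rw [show Wtᵀ * (Wc * Sc * Wcᵀ) = (Wtᵀ * Wc) * Sc * Wcᵀ by
        simp [Matrix.mul_assoc], horth]
      simp
    rw [this]; abel
  -- CX commutes with SX
  have hcomm : CX * SX = SX * CX := by
    have hMC : (Wc * Sc * Wcᵀ) * (Wt * St * Wtᵀ) = 0 := by
      rw [show (Wc * Sc * Wcᵀ) * (Wt * St * Wtᵀ)
          = Wc * Sc * (Wcᵀ * Wt) * St * Wtᵀ by simp [Matrix.mul_assoc], horth']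
      simp
    have hCM : (Wt * St * Wtᵀ) * (Wc * Sc * Wcᵀ) = 0 := by
      rw [show (Wt * St * Wtᵀ) * (Wc * Sc * Wcᵀ)
          = Wt * St * (Wtᵀ * Wc) * Sc * Wcᵀ by simp [Matrix.mul_assoc], horth]
      simp
    rw [hSX, hCX]
    simp only [Matrix.add_mul, Matrix.mul_add, hMC, hCM]
    simp only [Matrix.mul_smul, Matrix.smul_mul, Matrix.one_mul, Matrix.mul_one]
    abel
  have hinvcomm : CX⁻¹ * SX⁻¹ = SX⁻¹ * CX⁻¹ := by
    rw [← Matrix.mul_inv_rev, ← Matrix.mul_inv_rev, hcomm]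
  have hCdet : IsUnit CX.det := hCXpd.det_pos.ne'.isUnit
  have hSdet : IsUnit SX.det := hSXpd.det_pos.ne'.isUnit
  calc St * Wtᵀ * SX⁻¹ = St * (Wtᵀ * (CX * CX⁻¹)) * SX⁻¹ := by
        rw [Matrix.mul_nonsing_inv _ hCdet, Matrix.mul_one]
    _ = St * (Wtᵀ * CX * (SX⁻¹ * CX⁻¹)) := by
        rw [← hinvcomm]; simp [Matrix.mul_assoc]
    _ = St * (Wtᵀ * SX * SX⁻¹ * CX⁻¹) := by rw [key]; simp [Matrix.mul_assoc]
    _ = St * Wtᵀ * CX⁻¹ := by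
        rw [Matrix.mul_assoc Wtᵀ SX SX⁻¹, Matrix.mul_nonsing_inv _ hSdet,
          Matrix.mul_one, Matrix.mul_assoc]
end

section
/- Let s, p ≥ 1, let W_t ∈ ℝ^{s×2} and W_c ∈ ℝ^{s×p}, let Σ_t ∈ ℝ^{2×2} and Σ_c ∈ ℝ^{p×p} be symmetric positive definite, and let σ_v > 0. If W_tᵀ W_c = 0, then the inverse of Σ_X = W_t Σ_t W_tᵀ + W_c Σ_c W_cᵀ + σ_v² I_s is given by Σ_X⁻¹ = σ_v⁻² ( I_s − W_t (σ_v² Σ_t⁻¹ + W_tᵀ W_t)⁻¹ W_tᵀ − W_c (σ_v² Σ_c⁻¹ + W_cᵀ W_c)⁻¹ W_cᵀ ). -/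
open Matrix

private lemma posDef_smul_aux {n : Type*} [Fintype n] {M : Matrix n n ℝ} (hM : M.PosDef)
    {c : ℝ} (hc : 0 < c) : (c • M).PosDef := by
  refine ⟨?_, fun x hx => ?_⟩
  · unfold Matrix.IsHermitian
    rw [conjTranspose_smul, hM.1.eq, star_trivial]
  · exact (hM.smul hc).2 hx

private lemma key_cancel {s k : ℕ} (W : Matrix (Fin s) (Fin k) ℝ)
    (S : Matrix (Fin k) (Fin k) ℝ) (hS : S.PosDef) (σv : ℝ) (hσv : 0 < σv) :
    (S * (Wᵀ * W) + σv ^ 2 • 1) * (σv ^ 2 • S⁻¹ + Wᵀ * W)⁻¹ = S := by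
  have hA : (σv ^ 2 • S⁻¹ + Wᵀ * W).PosDef := by
    refine (posDef_smul_aux hS.inv (by positivity)).add_posSemidef ?_
    simpa [conjTranspose_eq_transpose_of_trivial] using posSemidef_conjTranspose_mul_self W
  have hSA : S * (σv ^ 2 • S⁻¹ + Wᵀ * W) = S * (Wᵀ * W) + σv ^ 2 • 1 := by
    rw [Matrix.mul_add, Matrix.mul_smul, Matrix.mul_nonsing_inv _ hS.det_pos.ne'.isUnit,
      add_comm]
  rw [← hSA, Matrix.mul_assoc, Matrix.mul_nonsing_inv _ hA.det_pos.ne'.isUnit, Matrix.mul_one]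

/-- Key inverse-covariance computation in the proof of Theorem 1: under the
orthogonality condition `Wtᵀ * Wc = 0`, the inverse of
`ΣX = Wt Σt Wtᵀ + Wc Σc Wcᵀ + σv² I` is
`σv⁻² (I − Wt (σv² Σt⁻¹ + Wtᵀ Wt)⁻¹ Wtᵀ − Wc (σv² Σc⁻¹ + Wcᵀ Wc)⁻¹ Wcᵀ)`. -/
theorem stmt_1 {s p : ℕ} (hs : 1 ≤ s) (hp : 1 ≤ p)
    (Wt : Matrix (Fin s) (Fin 2) ℝ) (Wc : Matrix (Fin s) (Fin p) ℝ)
    (St : Matrix (Fin 2) (Fin 2) ℝ) (Sc : Matrix (Fin p) (Fin p) ℝ)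
    (hSt : St.PosDef) (hSc : Sc.PosDef)
    (σv : ℝ) (hσv : 0 < σv)
    (horth : Wtᵀ * Wc = 0) :
    (Wt * St * Wtᵀ + Wc * Sc * Wcᵀ + σv ^ 2 • (1 : Matrix (Fin s) (Fin s) ℝ))⁻¹ =
      (σv ^ 2)⁻¹ • ((1 : Matrix (Fin s) (Fin s) ℝ)
        - Wt * (σv ^ 2 • St⁻¹ + Wtᵀ * Wt)⁻¹ * Wtᵀ
        - Wc * (σv ^ 2 • Sc⁻¹ + Wcᵀ * Wc)⁻¹ * Wcᵀ) := by
  have hσ2 : (σv ^ 2 : ℝ) ≠ 0 := by positivity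
  have horth' : Wcᵀ * Wt = 0 := by
    have := congrArg Matrix.transpose horth
    simpa [Matrix.transpose_mul] using this
  set M : Matrix (Fin s) (Fin s) ℝ :=
    Wt * St * Wtᵀ + Wc * Sc * Wcᵀ + σv ^ 2 • (1 : Matrix (Fin s) (Fin s) ℝ) with hM
  apply Matrix.inv_eq_right_inv
  have hMt : M * (Wt * (σv ^ 2 • St⁻¹ + Wtᵀ * Wt)⁻¹ * Wtᵀ) = Wt * St * Wtᵀ := by
    have h1 : M * Wt = Wt * (St * (Wtᵀ * Wt) + σv ^ 2 • 1) := by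
      simp only [hM, Matrix.add_mul, Matrix.smul_mul, Matrix.one_mul, Matrix.mul_add,
        Matrix.mul_smul, Matrix.mul_one, Matrix.mul_assoc, horth', Matrix.mul_zero]
      abel
    calc M * (Wt * (σv ^ 2 • St⁻¹ + Wtᵀ * Wt)⁻¹ * Wtᵀ)
        = (M * Wt) * (σv ^ 2 • St⁻¹ + Wtᵀ * Wt)⁻¹ * Wtᵀ := by
          simp only [Matrix.mul_assoc]
      _ = Wt * ((St * (Wtᵀ * Wt) + σv ^ 2 • 1) * (σv ^ 2 • St⁻¹ + Wtᵀ * Wt)⁻¹) * Wtᵀ := by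
          rw [h1]; simp only [Matrix.mul_assoc]
      _ = Wt * St * Wtᵀ := by rw [key_cancel Wt St hSt σv hσv]
  have hMc : M * (Wc * (σv ^ 2 • Sc⁻¹ + Wcᵀ * Wc)⁻¹ * Wcᵀ) = Wc * Sc * Wcᵀ := by
    have h1 : M * Wc = Wc * (Sc * (Wcᵀ * Wc) + σv ^ 2 • 1) := by
      simp only [hM, Matrix.add_mul, Matrix.smul_mul, Matrix.one_mul, Matrix.mul_add,
        Matrix.mul_smul, Matrix.mul_one, Matrix.mul_assoc, horth, Matrix.mul_zero]
      abel
    calc M * (Wc * (σv ^ 2 • Sc⁻¹ + Wcᵀ * Wc)⁻¹ * Wcᵀ)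
        = (M * Wc) * (σv ^ 2 • Sc⁻¹ + Wcᵀ * Wc)⁻¹ * Wcᵀ := by
          simp only [Matrix.mul_assoc]
      _ = Wc * ((Sc * (Wcᵀ * Wc) + σv ^ 2 • 1) * (σv ^ 2 • Sc⁻¹ + Wcᵀ * Wc)⁻¹) * Wcᵀ := by
          rw [h1]; simp only [Matrix.mul_assoc]
      _ = Wc * Sc * Wcᵀ := by rw [key_cancel Wc Sc hSc σv hσv]
  rw [Matrix.mul_smul, Matrix.mul_sub, Matrix.mul_sub, Matrix.mul_one, hMt, hMc, hM]
  rw [show Wt * St * Wtᵀ + Wc * Sc * Wcᵀ + σv ^ 2 • (1 : Matrix (Fin s) (Fin s) ℝ)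
      - Wt * St * Wtᵀ - Wc * Sc * Wcᵀ = σv ^ 2 • 1 by abel]
  rw [smul_smul, inv_mul_cancel₀ hσ2, one_smul]
end

section
/- Let s, p ≥ 1, let W_t ∈ ℝ^{s×2} and W_c ∈ ℝ^{s×p} with W_tᵀ W_c = 0, let Σ_t ∈ ℝ^{2×2} be symmetric positive definite, and let σ_v > 0. Define K_cal = Σ_t W_tᵀ (W_t Σ_t W_tᵀ + σ_v² I_s)⁻¹. Then K_cal W_c = 0. -/
open Matrix

/-- If gaze-dependent and subject-dependent appearance variations are orthogonal
(`Wtᵀ Wc = 0`), the ideal-calibration estimator `K_cal = Σt Wtᵀ (Wt Σt Wtᵀ + σv² I)⁻¹`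
annihilates the column space of `Wc`: `K_cal Wc = 0`. -/
theorem stmt_4 {s p : ℕ} (hs : 1 ≤ s) (hp : 1 ≤ p)
    (Wt : Matrix (Fin s) (Fin 2) ℝ) (Wc : Matrix (Fin s) (Fin p) ℝ)
    (horth : Wtᵀ * Wc = 0)
    (St : Matrix (Fin 2) (Fin 2) ℝ) (hSt : St.PosDef)
    (σv : ℝ) (hσv : 0 < σv)
    (Kcal : Matrix (Fin 2) (Fin s) ℝ)
    (hKcal : Kcal = St * Wtᵀ * (Wt * St * Wtᵀ + σv ^ 2 • (1 : Matrix (Fin s) (Fin s) ℝ))⁻¹) :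
    Kcal * Wc = 0 := by
  set M : Matrix (Fin s) (Fin s) ℝ :=
    Wt * St * Wtᵀ + σv ^ 2 • (1 : Matrix (Fin s) (Fin s) ℝ) with hM
  have hsm : (σv ^ 2 • (1 : Matrix (Fin s) (Fin s) ℝ)) =
      Matrix.diagonal (fun _ => σv ^ 2) := by
    ext i j
    by_cases h : i = j <;> simp [Matrix.one_apply, h]
  have hpd2 : (σv ^ 2 • (1 : Matrix (Fin s) (Fin s) ℝ)).PosDef := by
    rw [hsm]
    exact Matrix.PosDef.diagonal (fun _ => pow_pos hσv 2)
  have hps1 : (Wt * St * Wtᵀ).PosSemidef := by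
    have := hSt.posSemidef.mul_mul_conjTranspose_same Wt
    simpa [Matrix.conjTranspose_eq_transpose_of_trivial, Matrix.mul_assoc] using this
  have hMpd : M.PosDef := Matrix.PosDef.posSemidef_add hps1 hpd2
  have hMinv : M⁻¹ * M = 1 := Matrix.nonsing_inv_mul M hMpd.det_pos.ne'.isUnit
  -- M * Wc = σv ^ 2 • Wc
  have hMW : M * Wc = σv ^ 2 • Wc := by
    rw [hM, Matrix.add_mul, Matrix.mul_assoc, horth, Matrix.mul_zero,
      Matrix.smul_mul, Matrix.one_mul, zero_add]
  have hinvW : M⁻¹ * Wc = (σv ^ 2)⁻¹ • Wc := by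
    have h1 : M⁻¹ * (M * Wc) = Wc := by
      rw [← Matrix.mul_assoc, hMinv, Matrix.one_mul]
    rw [hMW, Matrix.mul_smul] at h1
    have hne : (σv ^ 2) ≠ 0 := (pow_pos hσv 2).ne'
    calc M⁻¹ * Wc = (σv ^ 2)⁻¹ • (σv ^ 2 • (M⁻¹ * Wc)) := by
          rw [smul_smul, inv_mul_cancel₀ hne, one_smul]
      _ = (σv ^ 2)⁻¹ • Wc := by rw [h1]
  rw [hKcal, Matrix.mul_assoc, hinvW, Matrix.mul_smul, Matrix.mul_assoc,
    horth, Matrix.mul_zero, smul_zero]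
end

section
/- Let s, p ≥ 1, let W_t ∈ ℝ^{s×2} and W_c ∈ ℝ^{s×p} with W_tᵀ W_c = 0, let Σ_t, Σ_b ∈ ℝ^{2×2} and Σ_c ∈ ℝ^{p×p} be symmetric positive definite, and let σ_v > 0. Define Σ_X = W_t Σ_t W_tᵀ + W_c Σ_c W_cᵀ + σ_v² I_s, for K ∈ ℝ^{2×s} define MSE(K) = Tr(Σ_t + Σ_b) − 2 Tr(K W_t Σ_t) + Tr(K Σ_X Kᵀ), and set K_cal = Σ_t W_tᵀ (W_t Σ_t W_tᵀ + σ_v² I_s)⁻¹. Then for every Δ ∈ ℝ^{2×s}, MSE(K_cal + Δ) − MSE(K_cal) = Tr(Δ Σ_X Δᵀ) ≥ 0. -/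
open Matrix

/-- A nonnegative scalar times the identity plus a PSD matrix situations:
positive scalar multiple of the identity is positive definite. -/
lemma aux_smul_one_posDef {n : ℕ} {c : ℝ} (hc : 0 < c) :
    (c • (1 : Matrix (Fin n) (Fin n) ℝ)).PosDef := by
  rw [Matrix.smul_one_eq_diagonal]
  exact Matrix.posDef_diagonal_iff.mpr (fun _ => hc)

/-- Trace of `M * A * Mᵀ` is nonnegative when `A` is positive semidefinite (real case). -/
lemma aux_trace_nonneg {m n : ℕ} {A : Matrix (Fin n) (Fin n) ℝ} (hA : A.PosSemidef)
    (M : Matrix (Fin m) (Fin n) ℝ) : 0 ≤ (M * A * Mᵀ).trace := by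
  have h : (M * A * Mᵀ).PosSemidef := by
    have := hA.mul_mul_conjTranspose_same M
    simpa [Matrix.conjTranspose_eq_transpose_of_trivial] using this
  rw [Matrix.trace]
  refine Finset.sum_nonneg fun i _ => ?_
  exact h.diag_nonneg

/-- Deterministic core of Theorem 2 of the paper: with
`ΣX = Wt Σt Wtᵀ + Wc Σc Wcᵀ + σv² I`, `MSE(K) = Tr(Σt + Σb) − 2 Tr(K Wt Σt) + Tr(K ΣX Kᵀ)`
and `K_cal = Σt Wtᵀ (Wt Σt Wtᵀ + σv² I)⁻¹`, for every perturbation `Δ`,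
`MSE(K_cal + Δ) − MSE(K_cal) = Tr(Δ ΣX Δᵀ) ≥ 0`. -/
theorem stmt_6 {s p : ℕ} (hs : 1 ≤ s) (hp : 1 ≤ p)
    (Wt : Matrix (Fin s) (Fin 2) ℝ) (Wc : Matrix (Fin s) (Fin p) ℝ)
    (horth : Wtᵀ * Wc = 0)
    (St Sb : Matrix (Fin 2) (Fin 2) ℝ) (Sc : Matrix (Fin p) (Fin p) ℝ)
    (hSt : St.PosDef) (hSb : Sb.PosDef) (hSc : Sc.PosDef)
    (σv : ℝ) (hσv : 0 < σv)
    (SX : Matrix (Fin s) (Fin s) ℝ)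
    (hSX : SX = Wt * St * Wtᵀ + Wc * Sc * Wcᵀ + σv ^ 2 • (1 : Matrix (Fin s) (Fin s) ℝ))
    (MSE : Matrix (Fin 2) (Fin s) ℝ → ℝ)
    (hMSE : ∀ K, MSE K = (St + Sb).trace - 2 * (K * Wt * St).trace + (K * SX * Kᵀ).trace)
    (Kcal : Matrix (Fin 2) (Fin s) ℝ)
    (hKcal : Kcal = St * Wtᵀ * (Wt * St * Wtᵀ + σv ^ 2 • (1 : Matrix (Fin s) (Fin s) ℝ))⁻¹) :
    ∀ Δ : Matrix (Fin 2) (Fin s) ℝ,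
      MSE (Kcal + Δ) - MSE Kcal = (Δ * SX * Δᵀ).trace ∧
      0 ≤ (Δ * SX * Δᵀ).trace := by
  intro Δ
  set A : Matrix (Fin s) (Fin s) ℝ :=
    Wt * St * Wtᵀ + σv ^ 2 • (1 : Matrix (Fin s) (Fin s) ℝ) with hA
  -- Symmetry facts
  have hStT : Stᵀ = St := by
    have := hSt.isHermitian
    simpa [Matrix.IsHermitian, Matrix.conjTranspose_eq_transpose_of_trivial] using this
  have hScT : Scᵀ = Sc := by
    have := hSc.isHermitian
    simpa [Matrix.IsHermitian, Matrix.conjTranspose_eq_transpose_of_trivial] using this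
  -- PSD pieces
  have hWtStWt : (Wt * St * Wtᵀ).PosSemidef := by
    have := hSt.posSemidef.mul_mul_conjTranspose_same Wt
    simpa [Matrix.conjTranspose_eq_transpose_of_trivial, Matrix.mul_assoc] using this
  have hWcScWc : (Wc * Sc * Wcᵀ).PosSemidef := by
    have := hSc.posSemidef.mul_mul_conjTranspose_same Wc
    simpa [Matrix.conjTranspose_eq_transpose_of_trivial, Matrix.mul_assoc] using this
  have hsmul : (σv ^ 2 • (1 : Matrix (Fin s) (Fin s) ℝ)).PosDef :=
    aux_smul_one_posDef (by positivity)
  have hApd : A.PosDef := Matrix.PosDef.posSemidef_add hWtStWt hsmul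
  have hSXpsd : SX.PosSemidef := by
    rw [hSX]
    exact ((hWtStWt.add hWcScWc).add hsmul.posSemidef)
  -- invertibility of A
  have hAinv : A⁻¹ * A = 1 :=
    Matrix.nonsing_inv_mul A hApd.det_pos.ne'.isUnit
  -- A⁻¹ * Wc = (σv^2)⁻¹ • Wc
  have hAWc : A * Wc = σv ^ 2 • Wc := by
    rw [hA]
    simp [Matrix.add_mul, Matrix.mul_assoc, horth, Matrix.smul_mul]
  have hAinvWc : A⁻¹ * Wc = (σv ^ 2)⁻¹ • Wc := by
    have h1 : A⁻¹ * (A * Wc) = Wc := by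
      rw [← Matrix.mul_assoc, hAinv, Matrix.one_mul]
    rw [hAWc, Matrix.mul_smul] at h1
    have hne : (σv:ℝ) ^ 2 ≠ 0 := by positivity
    calc A⁻¹ * Wc = (σv ^ 2)⁻¹ • (σv ^ 2 • (A⁻¹ * Wc)) := by
          rw [smul_smul, inv_mul_cancel₀ hne, one_smul]
      _ = (σv ^ 2)⁻¹ • Wc := by rw [h1]
  -- key identity : Kcal * SX = St * Wtᵀ
  have hkey : Kcal * SX = St * Wtᵀ := by
    have hSX' : SX = A + Wc * Sc * Wcᵀ := by rw [hSX, hA, add_right_comm]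
    rw [hKcal, hSX', Matrix.mul_add]
    have h1 : St * Wtᵀ * A⁻¹ * A = St * Wtᵀ := by
      rw [Matrix.mul_assoc, hAinv, Matrix.mul_one]
    have h2 : St * Wtᵀ * A⁻¹ * (Wc * Sc * Wcᵀ) = 0 := by
      have : St * Wtᵀ * A⁻¹ * (Wc * Sc * Wcᵀ)
          = St * (Wtᵀ * (A⁻¹ * Wc)) * (Sc * Wcᵀ) := by
        simp only [Matrix.mul_assoc]
      rw [this, hAinvWc, Matrix.mul_smul, horth]
      simp
    rw [h1, h2, add_zero]
  -- transpose versions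
  have hSXT : SXᵀ = SX := by
    rw [hSX]
    simp [Matrix.transpose_add, Matrix.transpose_mul, hStT, hScT, Matrix.transpose_smul,
      Matrix.mul_assoc]
  have hkeyT : SX * Kcalᵀ = Wt * St := by
    have := congrArg Matrix.transpose hkey
    rw [Matrix.transpose_mul, hSXT, Matrix.transpose_mul, Matrix.transpose_transpose, hStT]
      at this
    rw [this]
  -- trace identities for cross terms
  have hc1 : (Kcal * SX * Δᵀ).trace = (Δ * Wt * St).trace := by
    rw [hkey, ← Matrix.trace_transpose]
    simp [Matrix.transpose_mul, hStT, Matrix.mul_assoc]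
  have hc2 : (Δ * SX * Kcalᵀ).trace = (Δ * Wt * St).trace := by
    rw [Matrix.mul_assoc, hkeyT, ← Matrix.mul_assoc]
  constructor
  · rw [hMSE, hMSE]
    have expand : (Kcal + Δ) * SX * (Kcal + Δ)ᵀ
        = Kcal * SX * Kcalᵀ + Kcal * SX * Δᵀ + Δ * SX * Kcalᵀ + Δ * SX * Δᵀ := by
      rw [Matrix.transpose_add]
      simp only [Matrix.add_mul, Matrix.mul_add]
      abel
    have expand2 : (Kcal + Δ) * Wt * St = Kcal * Wt * St + Δ * Wt * St := by
      simp [Matrix.add_mul]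
    rw [expand, expand2]
    simp only [Matrix.trace_add]
    rw [hc1, hc2]
    ring
  · exact aux_trace_nonneg hSXpsd Δ
end

section
/- Let s, p ≥ 1, let W_t ∈ ℝ^{s×2} and W_c ∈ ℝ^{s×p} with W_tᵀ W_c = 0, let Σ_t ∈ ℝ^{2×2} and Σ̂_c ∈ ℝ^{p×p} be symmetric positive definite, let σ_v > 0, and let B ∈ ℝ^{2×p} be arbitrary. Then (Σ_t W_tᵀ + B W_cᵀ)(W_t Σ_t W_tᵀ + W_c Σ̂_c W_cᵀ + σ_v² I_s)⁻¹ = K_cal + ΔK, where K_cal = Σ_t W_tᵀ (W_t Σ_t W_tᵀ + σ_v² I_s)⁻¹ and ΔK = σ_v⁻² ( B W_cᵀ − B W_cᵀ W_c (σ_v² Σ̂_c⁻¹ + W_cᵀ W_c)⁻¹ W_cᵀ ). -/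
open Matrix

lemma posDef_smul' {n : Type*} [Fintype n] [DecidableEq n] {M : Matrix n n ℝ} (hM : M.PosDef)
    {c : ℝ} (hc : 0 < c) : (c • M).PosDef := by
  refine ⟨?_, fun x hx => ?_⟩
  · unfold Matrix.IsHermitian
    rw [conjTranspose_smul, hM.1.eq]
    simp
  · exact (hM.smul hc).2 hx

/-- Decomposition from the proof of Theorem 2: the limiting value of the estimator trained
without gaze decomposition satisfies
`(Σt Wtᵀ + B Wcᵀ)(Wt Σt Wtᵀ + Wc Σ̂c Wcᵀ + σv² I)⁻¹ = K_cal + ΔK`, where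
`K_cal = Σt Wtᵀ (Wt Σt Wtᵀ + σv² I)⁻¹` and
`ΔK = σv⁻² (B Wcᵀ − B Wcᵀ Wc (σv² Σ̂c⁻¹ + Wcᵀ Wc)⁻¹ Wcᵀ)`. -/
theorem stmt_7 {s p : ℕ} (hs : 1 ≤ s) (hp : 1 ≤ p)
    (Wt : Matrix (Fin s) (Fin 2) ℝ) (Wc : Matrix (Fin s) (Fin p) ℝ)
    (horth : Wtᵀ * Wc = 0)
    (St : Matrix (Fin 2) (Fin 2) ℝ) (Schat : Matrix (Fin p) (Fin p) ℝ)
    (hSt : St.PosDef) (hSchat : Schat.PosDef)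
    (σv : ℝ) (hσv : 0 < σv)
    (B : Matrix (Fin 2) (Fin p) ℝ)
    (Kcal ΔK : Matrix (Fin 2) (Fin s) ℝ)
    (hKcal : Kcal = St * Wtᵀ * (Wt * St * Wtᵀ + σv ^ 2 • (1 : Matrix (Fin s) (Fin s) ℝ))⁻¹)
    (hΔK : ΔK = (σv ^ 2)⁻¹ •
      (B * Wcᵀ - B * Wcᵀ * Wc * (σv ^ 2 • Schat⁻¹ + Wcᵀ * Wc)⁻¹ * Wcᵀ)) :
    (St * Wtᵀ + B * Wcᵀ) *
      (Wt * St * Wtᵀ + Wc * Schat * Wcᵀ + σv ^ 2 • (1 : Matrix (Fin s) (Fin s) ℝ))⁻¹ =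
      Kcal + ΔK := by
  have hσ2 : (0:ℝ) < σv ^ 2 := by positivity
  set Mt : Matrix (Fin s) (Fin s) ℝ := Wt * St * Wtᵀ + σv ^ 2 • 1 with hMtdef
  set N : Matrix (Fin p) (Fin p) ℝ := σv ^ 2 • Schat⁻¹ + Wcᵀ * Wc with hNdef
  set M : Matrix (Fin s) (Fin s) ℝ := Wt * St * Wtᵀ + Wc * Schat * Wcᵀ + σv ^ 2 • 1 with hMdef
  -- positive definiteness
  have hWtSt : (Wt * St * Wtᵀ).PosSemidef := by
    have := hSt.posSemidef.mul_mul_conjTranspose_same Wt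
    rwa [conjTranspose_eq_transpose_of_trivial] at this
  have hWcS : (Wc * Schat * Wcᵀ).PosSemidef := by
    have := hSchat.posSemidef.mul_mul_conjTranspose_same Wc
    rwa [conjTranspose_eq_transpose_of_trivial] at this
  have hI : ((σv ^ 2 : ℝ) • (1 : Matrix (Fin s) (Fin s) ℝ)).PosDef :=
    posDef_smul' Matrix.PosDef.one hσ2
  have hMt : Mt.PosDef := Matrix.PosDef.posSemidef_add hWtSt hI
  have hM : M.PosDef := Matrix.PosDef.posSemidef_add (hWtSt.add hWcS) hI
  have hWcWc : (Wcᵀ * Wc).PosSemidef := by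
    have := posSemidef_conjTranspose_mul_self Wc
    rwa [conjTranspose_eq_transpose_of_trivial] at this
  have hN : N.PosDef := Matrix.PosDef.add_posSemidef (posDef_smul' hSchat.inv hσ2) hWcWc
  have hMtu : IsUnit Mt.det := (isUnit_iff_isUnit_det Mt).1 hMt.isUnit
  have hMu : IsUnit M.det := (isUnit_iff_isUnit_det M).1 hM.isUnit
  have hNu : IsUnit N.det := (isUnit_iff_isUnit_det N).1 hN.isUnit
  have hSchatu : IsUnit Schat.det := (isUnit_iff_isUnit_det Schat).1 hSchat.isUnit
  have hWcWt : Wcᵀ * Wt = 0 := by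
    have := congrArg Matrix.transpose horth
    simpa using this
  -- Kcal * Wc = 0
  have hMtWc : Mt * Wc = σv ^ 2 • Wc := by
    rw [hMtdef, Matrix.add_mul, Matrix.mul_assoc, horth, Matrix.mul_zero, Matrix.smul_mul,
      Matrix.one_mul, zero_add]
  have hinvWc : Mt⁻¹ * Wc = (σv ^ 2)⁻¹ • Wc := by
    have h1 : Mt⁻¹ * (Mt * Wc) = Wc := by
      rw [← Matrix.mul_assoc, Matrix.nonsing_inv_mul Mt hMtu, Matrix.one_mul]
    rw [hMtWc, Matrix.mul_smul] at h1
    calc Mt⁻¹ * Wc = (σv ^ 2)⁻¹ • (σv ^ 2 • (Mt⁻¹ * Wc)) := by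
          rw [smul_smul, inv_mul_cancel₀ hσ2.ne', one_smul]
      _ = (σv ^ 2)⁻¹ • Wc := by rw [h1]
  have hKcalWc : Kcal * Wc = 0 := by
    rw [hKcal, Matrix.mul_assoc (St * Wtᵀ) Mt⁻¹ Wc, hinvWc, Matrix.mul_smul,
      Matrix.mul_assoc, horth, Matrix.mul_zero, smul_zero]
  -- Kcal * M = St * Wtᵀ
  have hKcalM : Kcal * M = St * Wtᵀ := by
    have hsplit : M = Mt + Wc * Schat * Wcᵀ := by rw [hMdef, hMtdef, add_right_comm]
    have h2 : Kcal * Mt = St * Wtᵀ := by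
      rw [hKcal, Matrix.mul_assoc, Matrix.nonsing_inv_mul Mt hMtu, Matrix.mul_one]
    have h3 : Kcal * (Wc * Schat * Wcᵀ) = 0 := by
      rw [← Matrix.mul_assoc, ← Matrix.mul_assoc, hKcalWc, Matrix.zero_mul, Matrix.zero_mul]
    rw [hsplit, Matrix.mul_add, h2, h3, add_zero]
  -- two forms of Wcᵀ * M
  have hWcM1 : Wcᵀ * M = σv ^ 2 • Wcᵀ + Wcᵀ * Wc * Schat * Wcᵀ := by
    rw [hMdef, Matrix.mul_add, Matrix.mul_add, ← Matrix.mul_assoc, ← Matrix.mul_assoc,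
      hWcWt, Matrix.zero_mul, Matrix.zero_mul, zero_add, Matrix.mul_smul, Matrix.mul_one,
      ← Matrix.mul_assoc, ← Matrix.mul_assoc, add_comm]
  have hWcM2 : Wcᵀ * M = N * Schat * Wcᵀ := by
    rw [hWcM1, hNdef, Matrix.add_mul, Matrix.add_mul, Matrix.smul_mul, Matrix.smul_mul,
      Matrix.nonsing_inv_mul Schat hSchatu, Matrix.one_mul]
  -- ΔK * M = B * Wcᵀ
  have hΔKM : ΔK * M = B * Wcᵀ := by
    have hBW : B * Wcᵀ * M = σv ^ 2 • (B * Wcᵀ) + B * Wcᵀ * Wc * Schat * Wcᵀ := by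
      rw [Matrix.mul_assoc, hWcM1, Matrix.mul_add, Matrix.mul_smul,
        ← Matrix.mul_assoc, ← Matrix.mul_assoc, ← Matrix.mul_assoc]
    have h2nd : B * Wcᵀ * Wc * N⁻¹ * Wcᵀ * M = B * Wcᵀ * Wc * Schat * Wcᵀ := by
      rw [Matrix.mul_assoc (B * Wcᵀ * Wc * N⁻¹) Wcᵀ M, hWcM2, ← Matrix.mul_assoc,
        ← Matrix.mul_assoc, Matrix.mul_assoc (B * Wcᵀ * Wc) N⁻¹ N,
        Matrix.nonsing_inv_mul N hNu, Matrix.mul_one]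
    rw [hΔK, Matrix.smul_mul, Matrix.sub_mul, hBW, h2nd, add_sub_cancel_right,
      smul_smul, inv_mul_cancel₀ hσ2.ne', one_smul]
  -- conclude
  have key : (Kcal + ΔK) * M = St * Wtᵀ + B * Wcᵀ := by
    rw [Matrix.add_mul, hKcalM, hΔKM]
  rw [← key, Matrix.mul_assoc, Matrix.mul_nonsing_inv M hMu, Matrix.mul_one]
end
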